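/- Let G = K ⋊_θ Q where every θ(Q)-orbit in K ∖ {1} is infinite. Then G is icc if and only if the restriction of θ to FC(Q) is injective. -/

import Mathlib

/-- The conjugacy class of `u` in `G`. -/
def conjClass {G : Type*} [Group G] (u : G) : Set G := {x | IsConj u x}

/-- A group is icc if it is nontrivial and every nontrivial conjugacy class is infinite. -/
def IsICC (G : Type*) [Group G] : Prop :=
  Nontrivial G ∧ ∀ g : G, g ≠ 1 → (conjClass g).Infinite

lemma conjClass_eq_range {G : Type*} [Group G] (u : G) :
    conjClass u = Set.range (fun c => c * u * c⁻¹) := by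
  ext x
  simp [conjClass, isConj_iff, Set.mem_range]

lemma conjClass_one {G : Type*} [Group G] : conjClass (1 : G) = {1} := by
  ext x
  simp [conjClass_eq_range]

open SemidirectProduct in
theorem icc_iff_theta_injOn_FC {K Q : Type*} [Group K] [Group Q]
    (θ : Q →* MulAut K) (hG : Nontrivial (K ⋊[θ] Q))
    (horb : ∀ k : K, k ≠ 1 → (Set.range fun q : Q => θ q k).Infinite) :
    IsICC (K ⋊[θ] Q) ↔ Set.InjOn θ {q : Q | (conjClass q).Finite} := by
  -- conjugation by `inr p`
  have hconj_inr : ∀ (p : Q) (g : K ⋊[θ] Q),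
      inr p * g * (inr p)⁻¹ = ⟨θ p g.left, p * g.right * p⁻¹⟩ := by
    intro p g
    ext <;> simp [mul_assoc]
  -- Lemma A : if the left component is nontrivial, the conjugacy class is infinite
  have lemA : ∀ g : K ⋊[θ] Q, g.left ≠ 1 → (conjClass g).Infinite := by
    intro g hk
    have hsub : Set.range (fun p : Q => inr p * g * (inr p)⁻¹) ⊆ conjClass g := by
      rintro x ⟨p, rfl⟩
      exact isConj_iff.2 ⟨inr p, rfl⟩
    refine Set.Infinite.mono hsub ?_
    have hfun : (SemidirectProduct.left ∘ fun p : Q => inr p * g * (inr p)⁻¹) =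
        fun p : Q => θ p g.left := by
      funext p
      show (inr p * g * (inr p)⁻¹).left = _
      rw [hconj_inr]
    have himg : SemidirectProduct.left ''
        Set.range (fun p : Q => inr p * g * (inr p)⁻¹) =
        Set.range fun p : Q => θ p g.left := by
      rw [← Set.range_comp, hfun]
    exact Set.Infinite.of_image SemidirectProduct.left (himg ▸ horb g.left hk)
  -- Lemma B : if the class of the right component is infinite, so is the class
  have lemB : ∀ g : K ⋊[θ] Q, (conjClass g.right).Infinite → (conjClass g).Infinite := by
    intro g hq
    have hsub : conjClass g.right ⊆ SemidirectProduct.right '' conjClass g := by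
      intro x hx
      rw [conjClass_eq_range] at hx
      obtain ⟨p, rfl⟩ := hx
      exact ⟨inr p * g * (inr p)⁻¹, isConj_iff.2 ⟨inr p, rfl⟩, by rw [hconj_inr]⟩
    exact Set.Infinite.of_image SemidirectProduct.right (hq.mono hsub)
  constructor
  · -- ICC → injective on FC
    rintro ⟨-, hicc⟩ q₁ h₁ q₂ h₂ hθ
    by_contra hne
    set q : Q := q₁ * q₂⁻¹ with hqdef
    have hq1 : q ≠ 1 := by
      intro h
      exact hne (mul_inv_eq_one.1 h)
    have hg : (inr q : K ⋊[θ] Q) ≠ 1 := by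
      intro h
      exact hq1 (inr_injective (by simpa using h))
    have hθq : θ q = 1 := by
      rw [hqdef, map_mul, map_inv, hθ, mul_inv_cancel]
    -- the conjugacy class of inr q is finite
    have hfin : (conjClass (inr q : K ⋊[θ] Q)).Finite := by
      have hsub : conjClass (inr q : K ⋊[θ] Q) ⊆
          inr '' (Set.image2 (fun a b => a * b⁻¹) (conjClass q₁) (conjClass q₂)) := by
        intro x hx
        rw [conjClass_eq_range] at hx
        obtain ⟨c, rfl⟩ := hx
        refine ⟨c.right * q * c.right⁻¹, ⟨c.right * q₁ * c.right⁻¹, isConj_iff.2 ⟨c.right, rfl⟩,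
          c.right * q₂ * c.right⁻¹, isConj_iff.2 ⟨c.right, rfl⟩, by simp only [hqdef]; group⟩, ?_⟩
        have hθ' : θ (c.right * q * c.right⁻¹) = 1 := by
          rw [map_mul, map_mul, hθq, map_inv, mul_one, mul_inv_cancel]
        have key : ∀ x : K, θ c.right (θ q ((θ c.right)⁻¹ x)) = x := by
          intro x
          have := congrArg (fun f : MulAut K => f x) hθ'
          simpa [map_mul, map_inv, MulAut.mul_apply] using this
        ext
        · have key' := key c.left
          simp only [MulAut.inv_def] at key'
          simp [key']
        · simp
      exact ((h₁.image2 _ h₂).image _).subset hsub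
    exact (hicc _ hg) hfin
  · -- injective on FC → ICC
    intro hinj
    refine ⟨hG, fun g hg => ?_⟩
    by_cases hk : g.left ≠ 1
    · exact lemA g hk
    · push_neg at hk
      set q : Q := g.right with hqdef
      have hgq : g = inr q := by ext <;> simp [hk, hqdef]
      have hq1 : q ≠ 1 := by
        intro h
        exact hg (by rw [hgq, h, map_one])
      by_cases hqc : (conjClass q).Infinite
      · exact lemB g hqc
      · rw [Set.not_infinite] at hqc
        -- θ q ≠ 1
        have hθq : θ q ≠ 1 := by
          intro h
          have h1 : (1 : Q) ∈ {q : Q | (conjClass q).Finite} := by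
            simp [conjClass_one]
          exact hq1 (hinj hqc h1 (by rw [h, map_one]))
        obtain ⟨a, ha⟩ : ∃ a : K, θ q a ≠ a := by
          by_contra h
          push_neg at h
          exact hθq (by ext x; simp [h x])
        set k₁ : K := a * (θ q a)⁻¹ with hk₁def
        have hk₁ : k₁ ≠ 1 := by
          simp only [hk₁def, ne_eq, mul_inv_eq_one]
          exact fun h => ha h.symm
        have hconj : IsConj g (⟨k₁, q⟩ : K ⋊[θ] Q) := by
          refine isConj_iff.2 ⟨inl a, ?_⟩
          rw [hgq]
          ext <;> simp [hk₁def]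
        have hleft : (⟨k₁, q⟩ : K ⋊[θ] Q).left ≠ 1 := hk₁
        refine (lemA _ hleft).mono ?_
        intro x hx
        exact hconj.trans hx
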